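/- For all j ≥ 0 and k ≥ 1, the functions F_k^j and L_k^j form a Galois connection on ℕ: for all m, n ≥ 0, F_k^j(n) ≤ m if and only if n ≤ L_k^j(m). Moreover this is a Galois insertion: F_k^j(L_k^j(m)) = m for all m ≥ 0. -/
import Mathlib


/-- The substitution τ_k, applied to a single letter: τ_k(k) = k1 and τ_k(i) = i+1 for i ≠ k. -/
def tauLetter (k i : ℕ) : List ℕ := if i = k then [k, 1] else [i + 1]

/-- The substitution τ_k, extended to finite words (lists of letters) by concatenation. -/
def tauWord (k : ℕ) (w : List ℕ) : List ℕ := w.flatMap (tauLetter k)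

/-- The infinite fixed point x_k of τ_k (starting with the letter k): its n-th letter is the
n-th letter of any sufficiently long iterate τ_k^j(k), here j = n+1. -/
def xk (k n : ℕ) : ℕ := ((tauWord k)^[n + 1] [k]).getD n 0

/-- L_k(n) = |τ_k(x_k[0:n))|, the length of the τ_k-image of the prefix of x_k of length n. -/
def Lk (k n : ℕ) : ℕ := (tauWord k ((List.range n).map (xk k))).length

/-- C_k^{(=i)}(n): the number of occurrences of the letter i among x_k[0],...,x_k[n-1]. -/
def Ceq (k i n : ℕ) : ℕ := ((Finset.range n).filter (fun m => xk k m = i)).card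

/-- C_k^{(>j)}(n): the number of positions m < n with x_k[m] > j. -/
def Cgt (k j n : ℕ) : ℕ := ((Finset.range n).filter (fun m => j < xk k m)).card

/-! ### Auxiliary development -/

namespace Stmt4Aux

lemma tauLetter_length_pos (k i : ℕ) : 0 < (tauLetter k i).length := by
  unfold tauLetter; split <;> simp

lemma tauWord_append (k : ℕ) (a b : List ℕ) :
    tauWord k (a ++ b) = tauWord k a ++ tauWord k b :=
  List.flatMap_append ..

lemma tauWord_singleton (k a : ℕ) : tauWord k [a] = tauLetter k a := by
  simp [tauWord]

lemma tauWord_prefix (k : ℕ) {a b : List ℕ} (h : a <+: b) :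
    tauWord k a <+: tauWord k b := by
  obtain ⟨c, rfl⟩ := h
  rw [tauWord_append]
  exact List.prefix_append _ _

lemma iter_prefix (k j : ℕ) : (tauWord k)^[j] [k] <+: (tauWord k)^[j+1] [k] := by
  induction j with
  | zero =>
    show [k] <+: tauWord k [k]
    rw [tauWord_singleton, tauLetter, if_pos rfl]
    exact ⟨[1], rfl⟩
  | succ j ih =>
    rw [Function.iterate_succ_apply', Function.iterate_succ_apply']
    exact tauWord_prefix k ih

lemma iter_prefix_le (k : ℕ) {i j : ℕ} (h : i ≤ j) :
    (tauWord k)^[i] [k] <+: (tauWord k)^[j] [k] := by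
  induction j with
  | zero => simp_all
  | succ j ih =>
    rcases Nat.lt_or_ge i (j+1) with h' | h'
    · exact (ih (by omega)).trans (iter_prefix k j)
    · have : i = j + 1 := by omega
      subst this; rfl

lemma tauWord_length_ge (k : ℕ) (w : List ℕ) : w.length ≤ (tauWord k w).length := by
  induction w with
  | nil => simp [tauWord]
  | cons a w ih =>
    have : tauWord k (a :: w) = tauLetter k a ++ tauWord k w := rfl
    rw [this, List.length_append, List.length_cons]
    have := tauLetter_length_pos k a
    omega

lemma iter_length (k j : ℕ) : j + 1 ≤ ((tauWord k)^[j] [k]).length := by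
  induction j with
  | zero => simp
  | succ j ih =>
    obtain ⟨t, ht⟩ := iter_prefix_le k (Nat.zero_le j)
    have ht' : (tauWord k)^[j] [k] = k :: t := by
      simpa using ht.symm
    rw [Function.iterate_succ_apply', ht']
    have h1 : tauWord k (k :: t) = tauLetter k k ++ tauWord k t := rfl
    have h2 := tauWord_length_ge k t
    have h3 : (tauLetter k k).length = 2 := by rw [tauLetter, if_pos rfl]; rfl
    have h4 : t.length + 1 = ((tauWord k)^[j] [k]).length := by rw [ht']; simp
    rw [h1, List.length_append, h3]
    omega

lemma xk_eq_getElem (k : ℕ) {j n : ℕ} (h : n < ((tauWord k)^[j] [k]).length) :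
    xk k n = ((tauWord k)^[j] [k])[n] := by
  have hn : n < ((tauWord k)^[n+1] [k]).length := by
    have := iter_length k (n+1); omega
  rw [xk, List.getD_eq_getElem _ _ hn]
  rcases Nat.le_total (n+1) j with h' | h'
  · exact (iter_prefix_le k h').getElem hn
  · exact ((iter_prefix_le k h').getElem h).symm

/-- The prefix of `x_k` of length `n`. -/
def W (k n : ℕ) : List ℕ := (List.range n).map (xk k)

@[simp] lemma W_length (k n : ℕ) : (W k n).length = n := by simp [W]

lemma W_getElem (k : ℕ) {N i : ℕ} (h : i < (W k N).length) : (W k N)[i] = xk k i := by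
  simp [W]

lemma W_eq_take (k : ℕ) {j n : ℕ} (h : n ≤ ((tauWord k)^[j] [k]).length) :
    W k n = ((tauWord k)^[j] [k]).take n := by
  apply List.ext_getElem
  · simp [Nat.min_eq_left h]
  · intro i h1 h2
    rw [W_getElem k h1, List.getElem_take]
    exact xk_eq_getElem k (by simp at h1; omega)

lemma Lk_def (k n : ℕ) : Lk k n = (tauWord k (W k n)).length := rfl

/-- Fundamental fixed-point property: τ_k(x_k[0:n)) = x_k[0:L_k(n)). -/
lemma W_fix (k n : ℕ) : W k (Lk k n) = tauWord k (W k n) := by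
  have h1 : n ≤ ((tauWord k)^[n] [k]).length := by have := iter_length k n; omega
  have hw : W k n = ((tauWord k)^[n] [k]).take n := W_eq_take k h1
  have hpre : tauWord k (W k n) <+: (tauWord k)^[n+1] [k] := by
    rw [Function.iterate_succ_apply']
    exact tauWord_prefix k (hw ▸ List.take_prefix n _)
  have hlen : Lk k n ≤ ((tauWord k)^[n+1] [k]).length := hpre.length_le
  rw [W_eq_take k hlen]
  have := List.prefix_iff_eq_take.mp hpre
  rw [← Lk_def] at this
  exact this.symm

lemma W_succ (k n : ℕ) : W k (n+1) = W k n ++ [xk k n] := by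
  rw [W, List.range_succ, List.map_append]; rfl

lemma Lk_zero (k : ℕ) : Lk k 0 = 0 := rfl

lemma Lk_succ (k n : ℕ) : Lk k (n+1) = Lk k n + (tauLetter k (xk k n)).length := by
  rw [Lk_def, Lk_def, W_succ, tauWord_append, tauWord_singleton, List.length_append]

lemma Lk_succ_of_eq (k n : ℕ) (hx : xk k n = k) : Lk k (n+1) = Lk k n + 2 := by
  rw [Lk_succ, hx, tauLetter, if_pos rfl]
  rfl

lemma Lk_succ_of_ne (k n : ℕ) (hx : xk k n ≠ k) : Lk k (n+1) = Lk k n + 1 := by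
  rw [Lk_succ, tauLetter, if_neg hx]
  rfl

lemma Lk_strictMono (k : ℕ) : StrictMono (Lk k) := by
  apply strictMono_nat_of_lt_succ
  intro n
  rw [Lk_succ]
  have := tauLetter_length_pos k (xk k n)
  omega

lemma le_Lk (k n : ℕ) : n ≤ Lk k n := (Lk_strictMono k).le_apply

lemma W_block (k m : ℕ) :
    W k (Lk k (m+1)) = W k (Lk k m) ++ tauLetter k (xk k m) := by
  rw [W_fix, W_fix, W_succ, tauWord_append, tauWord_singleton]

lemma xk_block_get (k m i : ℕ) (hi : i < (tauLetter k (xk k m)).length) :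
    xk k (Lk k m + i) = (tauLetter k (xk k m))[i] := by
  have hstep : Lk k (m+1) = Lk k m + (tauLetter k (xk k m)).length := Lk_succ k m
  have h1 : Lk k m + i < (W k (Lk k (m+1))).length := by simp; omega
  have h2 : xk k (Lk k m + i) = (W k (Lk k (m+1))).getD (Lk k m + i) 0 := by
    rw [List.getD_eq_getElem _ _ h1, W_getElem k h1]
  rw [W_block k m, List.getD_append_right _ _ _ _ (by simp)] at h2
  simp only [W_length, Nat.add_sub_cancel_left] at h2
  rw [h2, List.getD_eq_getElem _ _ hi]

lemma xk_Lk (k m : ℕ) : xk k (Lk k m) = if xk k m = k then k else xk k m + 1 := by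
  have h := xk_block_get k m 0 (tauLetter_length_pos k _)
  rw [Nat.add_zero] at h
  rw [h]
  by_cases hx : xk k m = k
  · simp [tauLetter, hx]
  · simp [tauLetter, hx]

lemma xk_Lk_add_one (k m : ℕ) (hx : xk k m = k) : xk k (Lk k m + 1) = 1 := by
  have h := xk_block_get k m 1 (by rw [tauLetter, if_pos hx]; simp)
  rw [h]
  simp [tauLetter, hx]

lemma xk_bounds (k : ℕ) (hk : 1 ≤ k) (n : ℕ) : 1 ≤ xk k n ∧ xk k n ≤ k := by
  have key : ∀ j, ∀ a ∈ (tauWord k)^[j] [k], 1 ≤ a ∧ a ≤ k := by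
    intro j
    induction j with
    | zero => intro a ha; simp at ha; omega
    | succ j ih =>
      rw [Function.iterate_succ_apply']
      intro a ha
      rw [tauWord, List.mem_flatMap] at ha
      obtain ⟨i, hi, hai⟩ := ha
      have hib := ih i hi
      by_cases hik : i = k
      · rw [tauLetter, if_pos hik] at hai
        simp at hai
        rcases hai with rfl | rfl <;> omega
      · rw [tauLetter, if_neg hik] at hai
        simp at hai
        omega
  have hn : n < ((tauWord k)^[n+1] [k]).length := by have := iter_length k (n+1); omega
  rw [xk_eq_getElem k hn]
  exact key (n+1) _ (List.getElem_mem hn)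

/-- Every position is either a block start `L_k(t)` or the second position of a length-2
block of a letter `k`. -/
lemma cover (k m : ℕ) : (∃ t, m = Lk k t) ∨ (∃ t, m = Lk k t + 1 ∧ xk k t = k) := by
  induction m with
  | zero => exact Or.inl ⟨0, (Lk_zero k).symm⟩
  | succ m ih =>
    rcases ih with ⟨t, rfl⟩ | ⟨t, rfl, hx⟩
    · by_cases hx : xk k t = k
      · exact Or.inr ⟨t, rfl, hx⟩
      · refine Or.inl ⟨t + 1, ?_⟩
        rw [Lk_succ, tauLetter, if_neg hx]
        rfl
    · refine Or.inl ⟨t + 1, ?_⟩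
      rw [Lk_succ, tauLetter, if_pos hx]
      rfl

/-- The lower adjoint of `Lk`. -/
def Gk (k n : ℕ) : ℕ := Nat.find (⟨n, le_Lk k n⟩ : ∃ m, n ≤ Lk k m)

lemma Gk_spec (k n : ℕ) : n ≤ Lk k (Gk k n) := by
  unfold Gk
  exact Nat.find_spec (⟨n, le_Lk k n⟩ : ∃ m, n ≤ Lk k m)

lemma gc (k m n : ℕ) : Gk k n ≤ m ↔ n ≤ Lk k m := by
  constructor
  · intro h
    exact (Gk_spec k n).trans ((Lk_strictMono k).monotone h)
  · intro h
    unfold Gk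
    exact Nat.find_min' (⟨n, le_Lk k n⟩ : ∃ m, n ≤ Lk k m) h

lemma Gk_Lk (k s : ℕ) : Gk k (Lk k s) = s := by
  refine le_antisymm ((gc k s _).mpr le_rfl) ?_
  exact ((Lk_strictMono k).le_iff_le).mp (Gk_spec k (Lk k s))

lemma Gk_Lk_add_one (k s : ℕ) : Gk k (Lk k s + 1) = s + 1 := by
  refine le_antisymm ((gc k _ _).mpr ?_) ?_
  · have : Lk k s < Lk k (s+1) := Lk_strictMono k (by omega)
    omega
  · have h := Gk_spec k (Lk k s + 1)
    have : Lk k s < Lk k (Gk k (Lk k s + 1)) := by omega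
    exact (Lk_strictMono k).lt_iff_lt.mp this

lemma Gk_zero (k : ℕ) : Gk k 0 = 0 :=
  Nat.le_zero.mp ((gc k 0 0).mpr (by rw [Lk_zero]))

lemma Gk_le (k n : ℕ) : Gk k n ≤ n := (gc k n n).mpr (le_Lk k n)

lemma Gk_step_not_mem (k m : ℕ) (h : ¬ ∃ t, m = Lk k t) : Gk k (m+1) = Gk k m := by
  rcases cover k m with hc | ⟨t, rfl, hx⟩
  · exact absurd hc h
  · have hstep : Lk k (t+1) = Lk k t + 2 := Lk_succ_of_eq k t hx
    have : Gk k (Lk k t + 1 + 1) = t + 1 := by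
      rw [show Lk k t + 1 + 1 = Lk k (t+1) by omega, Gk_Lk]
    rw [this, Gk_Lk_add_one]

lemma Gk_iter_Lk_iter (k : ℕ) : ∀ i s, (Gk k)^[i] ((Lk k)^[i] s) = s := by
  intro i
  induction i with
  | zero => intro s; rfl
  | succ i ih =>
    intro s
    rw [Function.iterate_succ_apply' (Lk k), Function.iterate_succ_apply (Gk k),
      Gk_Lk, ih]

lemma Gk_iter_Lk_iter_add_one (k : ℕ) : ∀ i s, (Gk k)^[i] ((Lk k)^[i] s + 1) = s + 1 := by
  intro i
  induction i with
  | zero => intro s; rfl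
  | succ i ih =>
    intro s
    rw [Function.iterate_succ_apply' (Lk k), Function.iterate_succ_apply (Gk k),
      Gk_Lk_add_one, ih]

lemma Gk_iter_step_not_mem (k : ℕ) :
    ∀ i m, (¬ ∃ s, m = (Lk k)^[i] s) → (Gk k)^[i] (m+1) = (Gk k)^[i] m := by
  intro i
  induction i with
  | zero => intro m h; exact absurd ⟨m, rfl⟩ h
  | succ i ih =>
    intro m h
    rcases cover k m with ⟨s, rfl⟩ | hc
    · have hs : ¬ ∃ u, s = (Lk k)^[i] u := by
        rintro ⟨u, rfl⟩
        exact h ⟨u, (Function.iterate_succ_apply' (Lk k) i u).symm⟩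
      rw [Function.iterate_succ_apply (Gk k), Function.iterate_succ_apply (Gk k),
        Gk_Lk_add_one, Gk_Lk, ih s hs]
    · have h1 : Gk k (m+1) = Gk k m := by
        apply Gk_step_not_mem
        rintro ⟨t, rfl⟩
        rcases hc with ⟨t', ht', hx'⟩
        have hstep : Lk k (t'+1) = Lk k t' + 2 := Lk_succ_of_eq k t' hx'
        have hmt : t' + 1 ≤ t := by
          by_contra h'
          push_neg at h'
          have : Lk k t ≤ Lk k t' := (Lk_strictMono k).monotone (by omega)
          omega
        have : Lk k (t'+1) ≤ Lk k t := (Lk_strictMono k).monotone hmt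
        omega
      rw [Function.iterate_succ_apply (Gk k), Function.iterate_succ_apply (Gk k), h1]

lemma letter_step (k i : ℕ) (h1 : 1 ≤ i) (h2 : i < k) (t : ℕ) :
    i + 1 ≤ xk k t ↔ ∃ s, t = Lk k s ∧ i ≤ xk k s := by
  constructor
  · intro h
    rcases cover k t with ⟨s, rfl⟩ | ⟨s, rfl, hx⟩
    · refine ⟨s, rfl, ?_⟩
      rw [xk_Lk] at h
      split at h <;> omega
    · rw [xk_Lk_add_one k s hx] at h
      omega
  · rintro ⟨s, rfl, hs⟩
    rw [xk_Lk]
    split <;> omega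

lemma letter_iff (k : ℕ) (hk : 1 ≤ k) : ∀ j, j < k → ∀ t,
    (j + 1 ≤ xk k t ↔ ∃ s, t = (Lk k)^[j] s) := by
  intro j
  induction j with
  | zero =>
    intro _ t
    simp only [Function.iterate_zero, id_eq]
    have := xk_bounds k hk t
    constructor
    · intro _; exact ⟨t, rfl⟩
    · intro _; omega
  | succ j ih =>
    intro hj t
    rw [letter_step k (j+1) (by omega) hj t]
    constructor
    · rintro ⟨s, rfl, hs⟩
      obtain ⟨u, rfl⟩ := (ih (by omega) s).mp hs
      exact ⟨u, (Function.iterate_succ_apply' (Lk k) j u).symm⟩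
    · rintro ⟨u, rfl⟩
      refine ⟨(Lk k)^[j] u, Function.iterate_succ_apply' (Lk k) j u, ?_⟩
      exact (ih (by omega) _).mpr ⟨u, rfl⟩

lemma Lk_iter_succ (k : ℕ) (hk : 1 ≤ k) (s : ℕ) :
    (Lk k)^[k] s = Lk k ((Lk k)^[k-1] s) := by
  obtain ⟨k', rfl⟩ : ∃ k', k = k' + 1 := ⟨k - 1, by omega⟩
  rw [Nat.add_sub_cancel, Function.iterate_succ_apply']

lemma xk_eq_k_iff (k : ℕ) (hk : 1 ≤ k) (t : ℕ) :
    xk k t = k ↔ ∃ s, t = (Lk k)^[k-1] s := by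
  have hb := xk_bounds k hk t
  have h := letter_iff k hk (k-1) (by omega) t
  rw [show k - 1 + 1 = k by omega] at h
  constructor
  · intro he; exact h.mp (by omega)
  · intro he; have := h.mpr he; omega

lemma mem_Lk_iter_k (k : ℕ) (hk : 1 ≤ k) (m : ℕ) :
    (∃ t, m = Lk k t ∧ xk k t = k) ↔ ∃ s, m = (Lk k)^[k] s := by
  constructor
  · rintro ⟨t, rfl, hx⟩
    obtain ⟨s, rfl⟩ := (xk_eq_k_iff k hk t).mp hx
    exact ⟨s, (Lk_iter_succ k hk s).symm⟩
  · rintro ⟨s, rfl⟩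
    exact ⟨(Lk k)^[k-1] s, Lk_iter_succ k hk s, (xk_eq_k_iff k hk _).mpr ⟨s, rfl⟩⟩

lemma rec_add (k : ℕ) (hk : 1 ≤ k) : ∀ n, Gk k (n+1) + (Gk k)^[k] n = n + 1 := by
  intro n
  induction n with
  | zero =>
    show Gk k 1 + (Gk k)^[k] 0 = 1
    have h1 : Gk k 1 = 1 := by
      have := Gk_Lk_add_one k 0
      rwa [Lk_zero] at this
    have h2 : (Gk k)^[k] 0 = 0 := Function.iterate_fixed (Gk_zero k) k
    omega
  | succ n ih =>
    show Gk k (n+2) + (Gk k)^[k] (n+1) = n + 2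
    rcases cover k (n+1) with ⟨t, ht⟩ | ⟨t, ht, hx⟩
    · have h2 : Gk k (n+2) = Gk k (n+1) + 1 := by
        have e : n + 2 = Lk k t + 1 := by omega
        rw [e, ht, Gk_Lk_add_one, Gk_Lk]
      have h3 : (Gk k)^[k] (n+1) = (Gk k)^[k] n := by
        apply Gk_iter_step_not_mem
        rintro ⟨s, hs⟩
        obtain ⟨u, hu, hxu⟩ := (mem_Lk_iter_k k hk n).mpr ⟨s, hs⟩
        have hstep : Lk k (u+1) = Lk k u + 2 := Lk_succ_of_eq k u hxu
        have hmt : u + 1 ≤ t := by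
          by_contra h'
          push_neg at h'
          have : Lk k t ≤ Lk k u := (Lk_strictMono k).monotone (by omega)
          omega
        have : Lk k (u+1) ≤ Lk k t := (Lk_strictMono k).monotone hmt
        omega
      omega
    · have hn : n = Lk k t := by omega
      obtain ⟨s, hs⟩ := (mem_Lk_iter_k k hk n).mp ⟨t, hn, hx⟩
      have h3 : (Gk k)^[k] (n+1) = s + 1 := by
        rw [hs]; exact Gk_iter_Lk_iter_add_one k k s
      have h4 : (Gk k)^[k] n = s := by
        rw [hs]; exact Gk_iter_Lk_iter k k s
      have hstep : Lk k (t+1) = Lk k t + 2 := Lk_succ_of_eq k t hx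
      have h2 : Gk k (n+2) = Gk k (n+1) := by
        have e1 : n + 2 = Lk k (t+1) := by omega
        have e2 : n + 1 = Lk k t + 1 := by omega
        rw [e1, e2, Gk_Lk, Gk_Lk_add_one]
      omega

lemma Gk_rec (k : ℕ) (hk : 1 ≤ k) (n : ℕ) (h : 1 ≤ n) :
    Gk k n = n - (Gk k)^[k] (n-1) := by
  have := rec_add k hk (n-1)
  rw [show n - 1 + 1 = n by omega] at this
  omega

lemma Gk_iter_le (k : ℕ) : ∀ i n, (Gk k)^[i] n ≤ n := by
  intro i
  induction i with
  | zero => intro n; exact le_rfl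
  | succ i ih =>
    intro n
    rw [Function.iterate_succ_apply (Gk k)]
    exact (ih (Gk k n)).trans (Gk_le k n)

end Stmt4Aux

open Stmt4Aux in
/-- F_k^j and L_k^j form a Galois connection on ℕ, and even a Galois insertion:
F_k^j ∘ L_k^j = id. -/
theorem stmt4 (k j : ℕ) (hk : 1 ≤ k) (F : ℕ → ℕ)
    (hF0 : F 0 = 0) (hF : ∀ n, 1 ≤ n → F n = n - F^[k] (n - 1)) :
    (∀ m n : ℕ, F^[j] n ≤ m ↔ n ≤ (Lk k)^[j] m) ∧
    (∀ m : ℕ, F^[j] ((Lk k)^[j] m) = m) := by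
  have hFG : ∀ n, F n = Gk k n := by
    intro n
    induction n using Nat.strong_induction_on with
    | _ n ih =>
      match n with
      | 0 => rw [hF0, Gk_zero]
      | n + 1 =>
        have hiter : ∀ i, F^[i] n = (Gk k)^[i] n := by
          intro i
          induction i with
          | zero => rfl
          | succ i ih2 =>
            rw [Function.iterate_succ_apply' F, Function.iterate_succ_apply' (Gk k),
              ih2]
            exact ih _ (Nat.lt_succ_of_le (Gk_iter_le k i n))
        rw [hF (n+1) (by omega), Gk_rec k hk (n+1) (by omega)]
        simp [hiter]
  have hGC1 : ∀ m n : ℕ, F n ≤ m ↔ n ≤ Lk k m := by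
    intro m n
    rw [hFG]
    exact gc k m n
  have hIter : ∀ j : ℕ, ∀ m n : ℕ, F^[j] n ≤ m ↔ n ≤ (Lk k)^[j] m := by
    intro j
    induction j with
    | zero => intro m n; rfl
    | succ j ihj =>
      intro m n
      rw [Function.iterate_succ_apply F, Function.iterate_succ_apply' (Lk k),
        ihj m (F n), hGC1]
  refine ⟨hIter j, ?_⟩
  intro m
  induction j with
  | zero => rfl
  | succ j ihj =>
    rw [Function.iterate_succ_apply F, Function.iterate_succ_apply' (Lk k),
      hFG, Gk_Lk]
    exact ihj
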